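/- Let d₁ ≥ 2 be an integer and d₂ ∈ {2, 9}, and let L = L_{d₁d₂}. Then for every real τ ≥ 0, the operator norm (with respect to the Euclidean norm on ℝ⁵) of the matrix exponential exp(τ·L) is at most 2. -/

import Mathlib

noncomputable section

/-- The 5×5 matrix `L_{d₁d₂}`: zero except `(L)₂₂ = −d₂`, `(L)₃₂ = 2`, `(L)₃₃ = −2`
(rows and columns indexed 1,…,5; here indexed `0,…,4`). -/
def Lmat (d₁ d₂ : ℕ) : Matrix (Fin 5) (Fin 5) ℝ :=
  Matrix.of fun i j =>
    if i = 1 ∧ j = 1 then -(d₂ : ℝ)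
    else if i = 2 ∧ j = 1 then 2
    else if i = 2 ∧ j = 2 then -2
    else 0

private lemma clm_apply (A : Matrix (Fin 5) (Fin 5) ℝ) (x : EuclideanSpace ℝ (Fin 5)) (i : Fin 5) :
    (Matrix.toEuclideanCLM (𝕜 := ℝ) A x) i = A.mulVec x i := rfl

private lemma abs_apply_le_norm (x : EuclideanSpace ℝ (Fin 5)) (i : Fin 5) : |x i| ≤ ‖x‖ := by
  calc |x i| = Real.sqrt (‖x i‖ ^ 2) := by rw [Real.norm_eq_abs, Real.sqrt_sq_eq_abs, abs_abs]
    _ ≤ ‖x‖ := by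
        rw [EuclideanSpace.norm_eq]
        exact Real.sqrt_le_sqrt <|
          Finset.single_le_sum (f := fun j => ‖x j‖ ^ 2) (fun j _ => sq_nonneg _)
            (Finset.mem_univ i)

private lemma norm_clm_diagonal_le {d : Fin 5 → ℝ} (hd : ∀ i, |d i| ≤ 1) :
    ‖Matrix.toEuclideanCLM (𝕜 := ℝ) (Matrix.diagonal d)‖ ≤ 1 := by
  refine ContinuousLinearMap.opNorm_le_bound _ one_pos.le fun x => ?_
  rw [one_mul, EuclideanSpace.norm_eq, EuclideanSpace.norm_eq]
  refine Real.sqrt_le_sqrt (Finset.sum_le_sum fun i _ => ?_)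
  rw [clm_apply, Matrix.mulVec_diagonal]
  have h1 := hd i
  have h2 := abs_nonneg (d i)
  have h3 := abs_nonneg (x i)
  simp only [Real.norm_eq_abs, abs_mul]
  have h4 : |d i| * |x i| ≤ |x i| := mul_le_of_le_one_left h3 h1
  exact pow_le_pow_left₀ (by positivity) h4 2

private lemma norm_clm_std_le (c : ℝ) :
    ‖Matrix.toEuclideanCLM (𝕜 := ℝ) (Matrix.single (2 : Fin 5) (1 : Fin 5) c)‖ ≤ |c| := by
  refine ContinuousLinearMap.opNorm_le_bound _ (abs_nonneg c) fun x => ?_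
  have hy : ∀ i, (Matrix.toEuclideanCLM (𝕜 := ℝ) (Matrix.single (2 : Fin 5) (1 : Fin 5) c)
      x) i = if i = 2 then c * x 1 else 0 := by
    intro i
    rw [clm_apply]
    fin_cases i <;>
      simp [Matrix.mulVec, dotProduct, Matrix.single, Fin.sum_univ_five]
  rw [EuclideanSpace.norm_eq, Fin.sum_univ_five, hy 0, hy 1, hy 2, hy 3, hy 4,
    if_neg (by decide : ¬((0 : Fin 5) = 2)), if_neg (by decide : ¬((1 : Fin 5) = 2)),
    if_pos rfl, if_neg (by decide : ¬((3 : Fin 5) = 2)), if_neg (by decide : ¬((4 : Fin 5) = 2))]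
  have h5 : Real.sqrt (‖(0 : ℝ)‖ ^ 2 + ‖(0 : ℝ)‖ ^ 2 + ‖c * x 1‖ ^ 2 + ‖(0 : ℝ)‖ ^ 2
      + ‖(0 : ℝ)‖ ^ 2) = |c| * |x 1| := by
    simp only [norm_zero, ne_eq, OfNat.ofNat_ne_zero, not_false_eq_true, zero_pow, add_zero,
      zero_add, Real.norm_eq_abs]
    rw [Real.sqrt_sq_eq_abs, abs_abs, abs_mul]
  rw [h5]
  exact mul_le_mul_of_nonneg_left (abs_apply_le_norm x 1) (abs_nonneg c)

private lemma norm_clm_one : ‖Matrix.toEuclideanCLM (𝕜 := ℝ) (1 : Matrix (Fin 5) (Fin 5) ℝ)‖ = 1 := by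
  rw [map_one]
  exact ContinuousLinearMap.norm_id

private lemma std_mul_std (a b : ℝ) :
    Matrix.single (2 : Fin 5) (1 : Fin 5) a * Matrix.single (2 : Fin 5) (1 : Fin 5) b = 0 :=
  Matrix.single_mul_single_of_ne (c := a) (2 : Fin 5) (1 : Fin 5)
    (2 : Fin 5) (by decide) b

private lemma exp_of_sq_zero (N : Matrix (Fin 5) (Fin 5) ℝ) (h : N ^ 2 = 0) :
    NormedSpace.exp N = 1 + N := by
  rw [show NormedSpace.exp N = ∑' n : ℕ, (n.factorial : ℝ)⁻¹ • N ^ n from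
    congrFun (NormedSpace.exp_eq_tsum ℝ) N]
  have hz : ∀ n ∉ ({0, 1} : Finset ℕ), (n.factorial : ℝ)⁻¹ • N ^ n = 0 := by
    intro n hn
    simp only [Finset.mem_insert, Finset.mem_singleton] at hn
    have h2 : 2 ≤ n := by omega
    have hN : N ^ n = 0 := by
      rw [show n = 2 + (n - 2) by omega, pow_add, h, zero_mul]
    rw [hN, smul_zero]
  rw [tsum_eq_sum hz, Finset.sum_pair (by norm_num : (0 : ℕ) ≠ 1)]
  simp [Nat.factorial]

set_option maxHeartbeats 1600000 in
/-- For `d₁ ≥ 2`, `d₂ ∈ {2, 9}` and every `τ ≥ 0`, the operator norm (w.r.t. the Euclidean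
norm on `ℝ⁵`) of the matrix exponential `exp(τ L_{d₁d₂})` is at most `2`. -/
theorem exp_Lmat_norm_le_two
    (d₁ d₂ : ℕ) (hd₁ : 2 ≤ d₁) (hd₂ : d₂ = 2 ∨ d₂ = 9)
    (τ : ℝ) (hτ : 0 ≤ τ) :
    ‖Matrix.toEuclideanCLM (𝕜 := ℝ) (NormedSpace.exp (τ • Lmat d₁ d₂))‖ ≤ 2 := by
  rcases hd₂ with rfl | rfl
  · -- d₂ = 2 : Jordan block case
    set dv : Fin 5 → ℝ := ![0, -2, -2, 0, 0] with hdv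
    have hsplit : τ • Lmat d₁ 2 =
        Matrix.diagonal (fun i => τ * dv i) + Matrix.single (2 : Fin 5) (1 : Fin 5) (2 * τ) := by
      ext i j
      fin_cases i <;> fin_cases j <;>
        simp [Lmat, Matrix.diagonal, Matrix.single, hdv] <;> ring
    have hcomm : Commute (Matrix.diagonal (fun i => τ * dv i))
        (Matrix.single (2 : Fin 5) (1 : Fin 5) (2 * τ)) := by
      show _ * _ = _ * _
      ext i j
      fin_cases i <;> fin_cases j <;>
        simp [Matrix.mul_apply, Fin.sum_univ_five, Matrix.diagonal, Matrix.single, hdv] <;>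
        ring
    have hN2 : Matrix.single (2 : Fin 5) (1 : Fin 5) (2 * τ) ^ 2 = 0 := by
      rw [sq, std_mul_std]
    have hexp : NormedSpace.exp (τ • Lmat d₁ 2) =
        Matrix.diagonal (fun i => Real.exp (τ * dv i)) +
          Matrix.single (2 : Fin 5) (1 : Fin 5) (Real.exp (τ * dv 2) * (2 * τ)) := by
      rw [hsplit, Matrix.exp_add_of_commute _ _ hcomm, exp_of_sq_zero _ hN2,
        Matrix.exp_diagonal]
      have hdiag : (NormedSpace.exp fun i => τ * dv i) = fun i => Real.exp (τ * dv i) := by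
        funext i
        rw [Pi.coe_exp, Real.exp_eq_exp_ℝ]
      rw [hdiag, mul_add, mul_one]
      congr 1
      ext i j
      fin_cases i <;> fin_cases j <;>
        simp [Matrix.mul_apply, Fin.sum_univ_five, Matrix.diagonal, Matrix.single]
    rw [hexp, map_add]
    have h1 : ‖Matrix.toEuclideanCLM (𝕜 := ℝ)
        (Matrix.diagonal (fun i => Real.exp (τ * dv i)))‖ ≤ 1 := by
      refine norm_clm_diagonal_le fun i => ?_
      rw [abs_of_pos (Real.exp_pos _), Real.exp_le_one_iff]
      fin_cases i <;> simp [hdv] <;> nlinarith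
    have h2 : ‖Matrix.toEuclideanCLM (𝕜 := ℝ)
        (Matrix.single (2 : Fin 5) (1 : Fin 5) (Real.exp (τ * dv 2) * (2 * τ)))‖ ≤ 1 := by
      refine (norm_clm_std_le _).trans ?_
      have hd2 : dv 2 = -2 := by simp [hdv]
      rw [hd2]
      have hp := Real.exp_pos (2 * τ)
      have hle := Real.add_one_le_exp (2 * τ)
      rw [abs_of_nonneg (by positivity)]
      have : Real.exp (τ * -2) = (Real.exp (2 * τ))⁻¹ := by
        rw [← Real.exp_neg]; ring_nf
      rw [this]
      calc (Real.exp (2 * τ))⁻¹ * (2 * τ) ≤ (Real.exp (2 * τ))⁻¹ * Real.exp (2 * τ) := by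
            exact mul_le_mul_of_nonneg_left (by linarith) (by positivity)
        _ = 1 := inv_mul_cancel₀ hp.ne'
    calc ‖_ + _‖ ≤ _ + _ := norm_add_le _ _
      _ ≤ 1 + 1 := add_le_add h1 h2
      _ = 2 := by norm_num
  · -- d₂ = 9 : diagonalizable case
    set dv : Fin 5 → ℝ := ![0, -9, -2, 0, 0] with hdv
    set a : ℝ := 2 / 7 with ha
    have hadd : ∀ x y : ℝ, (1 + Matrix.single (2 : Fin 5) (1 : Fin 5) x) *
        (1 + Matrix.single (2 : Fin 5) (1 : Fin 5) y) =
        1 + Matrix.single (2 : Fin 5) (1 : Fin 5) (x + y) := by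
      intro x y
      rw [mul_add, add_mul, add_mul, one_mul, one_mul, mul_one, std_mul_std, add_zero,
        Matrix.single_add, add_assoc]
    have hinv1 : (1 + Matrix.single (2 : Fin 5) (1 : Fin 5) (-a)) *
        (1 + Matrix.single (2 : Fin 5) (1 : Fin 5) a) = 1 := by
      rw [hadd]; norm_num
    have hinv2 : (1 + Matrix.single (2 : Fin 5) (1 : Fin 5) a) *
        (1 + Matrix.single (2 : Fin 5) (1 : Fin 5) (-a)) = 1 := by
      rw [hadd]; norm_num
    set U : (Matrix (Fin 5) (Fin 5) ℝ)ˣ :=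
      ⟨1 + Matrix.single (2 : Fin 5) (1 : Fin 5) (-a),
       1 + Matrix.single (2 : Fin 5) (1 : Fin 5) a, hinv1, hinv2⟩ with hU
    have hconj : τ • Lmat d₁ 9 =
        (U : Matrix (Fin 5) (Fin 5) ℝ) * (Matrix.diagonal (fun i => τ * dv i)) *
          ((U⁻¹ : _ˣ) : Matrix (Fin 5) (Fin 5) ℝ) := by
      show _ = (1 + Matrix.single (2 : Fin 5) (1 : Fin 5) (-a)) *
        (Matrix.diagonal (fun i => τ * dv i)) * (1 + Matrix.single (2 : Fin 5) (1 : Fin 5) a)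
      ext i j
      fin_cases i <;> fin_cases j <;>
        simp [Lmat, Matrix.mul_apply, Fin.sum_univ_five, Matrix.diagonal,
          Matrix.single, Matrix.one_apply, hdv, ha] <;> ring
    have hexp : NormedSpace.exp (τ • Lmat d₁ 9) =
        (U : Matrix (Fin 5) (Fin 5) ℝ) *
          NormedSpace.exp (Matrix.diagonal (fun i => τ * dv i)) *
          ((U⁻¹ : _ˣ) : Matrix (Fin 5) (Fin 5) ℝ) := by
      rw [hconj]; exact Matrix.exp_units_conj U _
    rw [hexp, map_mul, map_mul]
    have hdiagexp : NormedSpace.exp (Matrix.diagonal (fun i => τ * dv i)) =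
        Matrix.diagonal (fun i => Real.exp (τ * dv i)) := by
      rw [Matrix.exp_diagonal]
      have hdiag : (NormedSpace.exp fun i => τ * dv i) = fun i => Real.exp (τ * dv i) :=
        funext fun i => by rw [Pi.coe_exp, Real.exp_eq_exp_ℝ]
      rw [hdiag]
    have hg : ‖Matrix.toEuclideanCLM (𝕜 := ℝ)
        (NormedSpace.exp (Matrix.diagonal (fun i => τ * dv i)))‖ ≤ 1 := by
      rw [hdiagexp]
      refine norm_clm_diagonal_le fun i => ?_
      rw [abs_of_pos (Real.exp_pos _), Real.exp_le_one_iff]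
      fin_cases i <;> simp [hdv] <;> nlinarith
    have hf : ‖Matrix.toEuclideanCLM (𝕜 := ℝ) (U : Matrix (Fin 5) (Fin 5) ℝ)‖ ≤ 9 / 7 := by
      show ‖Matrix.toEuclideanCLM (𝕜 := ℝ) (n := Fin 5)
        (1 + Matrix.single (2 : Fin 5) (1 : Fin 5) (-a))‖ ≤ 9 / 7
      rw [map_add]
      refine (norm_add_le _ _).trans ?_
      rw [norm_clm_one]
      have := norm_clm_std_le (-a)
      rw [ha] at this ⊢
      calc (1 : ℝ) + ‖Matrix.toEuclideanCLM (𝕜 := ℝ)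
            (Matrix.single (2 : Fin 5) (1 : Fin 5) (-(2 / 7)))‖ ≤ 1 + |(-(2 / 7) : ℝ)| := by
            linarith
        _ = 9 / 7 := by
            rw [abs_neg, abs_of_pos (by norm_num : (0 : ℝ) < 2 / 7)]; norm_num
    have hh : ‖Matrix.toEuclideanCLM (𝕜 := ℝ) ((U⁻¹ : _ˣ) : Matrix (Fin 5) (Fin 5) ℝ)‖ ≤ 9 / 7 := by
      show ‖Matrix.toEuclideanCLM (𝕜 := ℝ) (n := Fin 5)
        (1 + Matrix.single (2 : Fin 5) (1 : Fin 5) a)‖ ≤ 9 / 7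
      rw [map_add]
      refine (norm_add_le _ _).trans ?_
      rw [norm_clm_one]
      have := norm_clm_std_le a
      rw [ha] at this ⊢
      calc (1 : ℝ) + ‖Matrix.toEuclideanCLM (𝕜 := ℝ)
            (Matrix.single (2 : Fin 5) (1 : Fin 5) (2 / 7))‖ ≤ 1 + |((2 / 7) : ℝ)| := by
            linarith
        _ = 9 / 7 := by
            rw [abs_of_pos (by norm_num : (0 : ℝ) < 2 / 7)]; norm_num
    have hfn := norm_nonneg (Matrix.toEuclideanCLM (𝕜 := ℝ) (U : Matrix (Fin 5) (Fin 5) ℝ))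
    have hgn := norm_nonneg (Matrix.toEuclideanCLM (𝕜 := ℝ)
      (NormedSpace.exp (Matrix.diagonal (fun i => τ * dv i))))
    have hhn := norm_nonneg (Matrix.toEuclideanCLM (𝕜 := ℝ)
      ((U⁻¹ : _ˣ) : Matrix (Fin 5) (Fin 5) ℝ))
    have hstep1 : ‖Matrix.toEuclideanCLM (𝕜 := ℝ) (U : Matrix (Fin 5) (Fin 5) ℝ)‖ *
        ‖Matrix.toEuclideanCLM (𝕜 := ℝ)
          (NormedSpace.exp (Matrix.diagonal (fun i => τ * dv i)))‖ ≤ 9 / 7 * 1 :=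
      mul_le_mul hf hg hgn (by norm_num)
    have hstep2 := mul_le_mul hstep1 hh hhn (by norm_num : (0 : ℝ) ≤ 9 / 7 * 1)
    calc ‖_ * _ * _‖ ≤ ‖_ * _‖ * ‖_‖ := norm_mul_le _ _
      _ ≤ ‖_‖ * ‖_‖ * ‖_‖ :=
          mul_le_mul_of_nonneg_right (norm_mul_le _ _) (norm_nonneg _)
      _ ≤ 2 := by linarith
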